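/- In any symmetric Leibniz algebra over a field of characteristic different from 2, the cube of every element is zero: for all x, (xx)x = 0 and x(xx) = 0. -/

import Mathlib

/-- In any symmetric Leibniz algebra over a field of characteristic `≠ 2`,
the cube of every element is zero. -/
theorem stmt_6 {k A : Type*} [Field k] [NonUnitalNonAssocRing A] [Module k A]
    [IsScalarTower k A A] [SMulCommClass k A A]
    (h2 : (2 : k) ≠ 0)
    (hL : ∀ x y z : A, x * (y * z) = (x * y) * z + y * (x * z))
    (hR : ∀ x y z : A, (x * y) * z = (x * z) * y + x * (y * z)) :
    ∀ x : A, (x * x) * x = 0 ∧ x * (x * x) = 0 := by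
  intro x
  have h1 := hL x x x
  have h3 := hR x x x
  constructor
  · have := (right_eq_add).mp h1
    exact this
  · exact (left_eq_add).mp h3
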